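/- arXiv:2512.18349 — 9 statements merged into one kernel-verified Lean document; each statement's English description precedes it below -/
import Mathlib

section
/- For every linear order Γ, the map Δ ↦ H_Δ is an inclusion-preserving bijection from the end segments of Γ onto the convex subgroups of G = Lex(Γ →₀ ℤ); that is, every H_Δ is a convex subgroup of G, for end segments Δ, Δ' one has Δ ⊆ Δ' if and only if H_Δ ⊆ H_{Δ'}, and every convex subgroup of G equals H_Δ for a unique end segment Δ of Γ. -/
/-- An end segment of a linear order `Γ`: an upward closed subset. -/
def IsEndSegment {Γ : Type*} [LinearOrder Γ] (Δ : Set Γ) : Prop :=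
  ∀ ⦃i j : Γ⦄, i ∈ Δ → i ≤ j → j ∈ Δ

/-- A convex subgroup of `G = Lex (Γ →₀ ℤ)`, as a subset: it contains `0`, is closed under
addition and negation, and whenever `g ∈ H` and `|h| ≤ |g|` then `h ∈ H`. -/
def IsConvexSubgroup {Γ : Type*} [LinearOrder Γ] (H : Set (Lex (Γ →₀ ℤ))) : Prop :=
  (0 : Lex (Γ →₀ ℤ)) ∈ H ∧ (∀ a ∈ H, ∀ b ∈ H, a + b ∈ H) ∧ (∀ a ∈ H, -a ∈ H) ∧
    ∀ g ∈ H, ∀ h : Lex (Γ →₀ ℤ), |h| ≤ |g| → h ∈ H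

/-- `H_Δ = {g ∈ G | support g ⊆ Δ}`. -/
def HSeg {Γ : Type*} [LinearOrder Γ] (Δ : Set Γ) : Set (Lex (Γ →₀ ℤ)) :=
  {g | ↑(ofLex g).support ⊆ Δ}

section Aux

variable {Γ : Type*} [LinearOrder Γ]

lemma Finsupp.lt_of_forall_lt_of_lt (a b : Lex (Γ →₀ ℤ)) (i : Γ)
    (h1 : ∀ j < i, ofLex a j = ofLex b j) (h2 : ofLex a i < ofLex b i) : a < b :=
  Finsupp.lex_def.mpr ⟨i, h1, h2⟩

/-- The support of `|g|` is the support of `g`. -/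
lemma aux_supp_abs (g : Lex (Γ →₀ ℤ)) : (ofLex |g|).support = (ofLex g).support := by
  rcases abs_choice g with h | h <;> rw [h]
  rw [ofLex_neg, Finsupp.support_neg]

/-- A positive element has a first coordinate, where it is positive. -/
lemma aux_pos_min {a : Lex (Γ →₀ ℤ)} (ha : 0 < a) :
    ∃ i₀, (∀ j ∈ (ofLex a).support, i₀ ≤ j) ∧ 0 < ofLex a i₀ := by
  obtain ⟨j, h1, h2⟩ := Finsupp.lex_def.mp ha
  refine ⟨j, fun k hk => ?_, by simpa using h2⟩
  by_contra hkj
  push_neg at hkj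
  have := h1 k hkj
  simp only [ofLex_zero, Finsupp.coe_zero, Pi.zero_apply] at this
  exact (Finsupp.mem_support_iff.mp hk) this.symm

/-- Key lemma: if `|h| ≤ |g|`, every element of the support of `h` lies above some
element of the support of `g`. -/
lemma aux_key {g h : Lex (Γ →₀ ℤ)} (hle : |h| ≤ |g|) {i : Γ}
    (hi : i ∈ (ofLex h).support) : ∃ j ∈ (ofLex g).support, j ≤ i := by
  have hh0 : h ≠ 0 := by
    intro e
    rw [e] at hi
    simp at hi
  obtain ⟨i₀, hmin, hval⟩ := aux_pos_min (abs_pos.mpr hh0)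
  have hi₀ : i₀ ≤ i := hmin i (by rwa [aux_supp_abs])
  by_contra hcon
  push_neg at hcon
  have hglt : |g| < |h| := by
    refine Finsupp.lt_of_forall_lt_of_lt _ _ i₀ (fun d hd => ?_) ?_
    · have hgd : ofLex |g| d = 0 := by
        rw [Finsupp.notMem_support_iff.mp]
        rw [aux_supp_abs]
        intro hds
        exact absurd (hd.le.trans hi₀) (not_le.mpr (hcon d hds))
      have hhd : ofLex |h| d = 0 := by
        rw [Finsupp.notMem_support_iff.mp]
        intro hds
        exact absurd (hmin d hds) (not_le.mpr hd)
      rw [hgd, hhd]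
    · have hg0 : ofLex |g| i₀ = 0 := by
        rw [Finsupp.notMem_support_iff.mp]
        rw [aux_supp_abs]
        intro hds
        exact absurd hi₀ (not_le.mpr (hcon i₀ hds))
      rw [hg0]
      exact hval
  exact absurd (hglt.trans_le hle) (lt_irrefl _)

lemma aux_single_pos (i : Γ) {b : ℤ} (hb : 0 < b) :
    (0 : Lex (Γ →₀ ℤ)) < toLex (Finsupp.single i b) := by
  refine Finsupp.lt_of_forall_lt_of_lt _ _ i (fun d hd => ?_) ?_
  · simp [Finsupp.single_apply, hd.ne']
  · simpa using hb

lemma aux_abs_single (i : Γ) : |toLex (Finsupp.single i (1 : ℤ))| = toLex (Finsupp.single i 1) :=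
  abs_of_pos (aux_single_pos i one_pos)

lemma aux_single_mono {i j : Γ} (hij : i ≤ j) :
    toLex (Finsupp.single j (1 : ℤ)) ≤ toLex (Finsupp.single i 1) := by
  rcases eq_or_lt_of_le hij with rfl | hij
  · exact le_rfl
  · refine le_of_lt (Finsupp.lt_of_forall_lt_of_lt _ _ i (fun d hd => ?_) ?_)
    · simp [Finsupp.single_apply, hd.ne', (hd.trans hij).ne']
    · simp [Finsupp.single_apply, hij.ne']

lemma aux_single_int_mem {H : Set (Lex (Γ →₀ ℤ))} (hH : IsConvexSubgroup H) {a : Γ}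
    (ha : toLex (Finsupp.single a (1 : ℤ)) ∈ H) (b : ℤ) :
    toLex (Finsupp.single a b) ∈ H := by
  obtain ⟨h0, hadd, hneg, -⟩ := hH
  have hnat : ∀ n : ℕ, toLex (Finsupp.single a (n : ℤ)) ∈ H := by
    intro n
    induction n with
    | zero => simpa using h0
    | succ n ih =>
        have : toLex (Finsupp.single a ((n : ℤ) + 1)) =
            toLex (Finsupp.single a (n : ℤ)) + toLex (Finsupp.single a (1 : ℤ)) := by
          rw [← toLex_add, Finsupp.single_add]
        rw [Nat.cast_succ, this]
        exact hadd _ ih _ ha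
  rcases le_or_gt 0 b with hb | hb
  · obtain ⟨n, rfl⟩ := Int.eq_ofNat_of_zero_le hb
    exact hnat n
  · obtain ⟨n, rfl⟩ : ∃ n : ℕ, b = -(n : ℤ) :=
      ⟨b.natAbs, by omega⟩
    have : toLex (Finsupp.single a (-(n : ℤ))) = -toLex (Finsupp.single a (n : ℤ)) := by
      rw [← toLex_neg, Finsupp.single_neg]
    rw [this]
    exact hneg _ (hnat n)

lemma aux_mem_of_forall_single {H : Set (Lex (Γ →₀ ℤ))} (hH : IsConvexSubgroup H)
    (g : Γ →₀ ℤ) (hg : ∀ i ∈ g.support, toLex (Finsupp.single i (1 : ℤ)) ∈ H) :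
    toLex g ∈ H := by
  induction g using Finsupp.induction with
  | zero => simpa using hH.1
  | single_add a b f haf hb ih =>
      have hsupp : (Finsupp.single a b + f).support = Finset.cons a f.support haf :=
        Finsupp.support_single_add haf hb
      have ha1 : toLex (Finsupp.single a (1 : ℤ)) ∈ H := by
        refine hg a ?_
        rw [hsupp]
        exact Finset.mem_cons_self _ _
      have hf : toLex f ∈ H := by
        refine ih fun i hi => hg i ?_
        rw [hsupp]
        exact Finset.mem_cons_of_mem hi
      rw [toLex_add]
      exact hH.2.1 _ (aux_single_int_mem hH ha1 b) _ hf

lemma aux_single_mem_of_mem {H : Set (Lex (Γ →₀ ℤ))} (hH : IsConvexSubgroup H)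
    {g : Lex (Γ →₀ ℤ)} (hg : g ∈ H) {i : Γ} (hi : i ∈ (ofLex g).support) :
    toLex (Finsupp.single i (1 : ℤ)) ∈ H := by
  have hg0 : g ≠ 0 := by
    intro e; rw [e] at hi; simp at hi
  have habs : |g| ∈ H := hH.2.2.2 g hg |g| (by rw [abs_abs])
  have hgg : |g| + |g| ∈ H := hH.2.1 _ habs _ habs
  obtain ⟨i₀, hmin, hval⟩ := aux_pos_min (abs_pos.mpr hg0)
  have hi₀ : i₀ ≤ i := hmin i (by rwa [aux_supp_abs])
  have hlt : toLex (Finsupp.single i (1 : ℤ)) < |g| + |g| := by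
    refine Finsupp.lt_of_forall_lt_of_lt _ _ i₀ (fun d hd => ?_) ?_
    · have hd0 : ofLex |g| d = 0 := by
        rw [Finsupp.notMem_support_iff.mp]
        intro hds
        exact absurd (hmin d hds) (not_le.mpr hd)
      have : ofLex (|g| + |g|) d = 0 := by
        rw [ofLex_add, Finsupp.add_apply, hd0, add_zero]
      rw [this, ofLex_toLex, Finsupp.single_apply,
        if_neg (by rintro rfl; exact absurd hd (not_lt.mpr hi₀))]
    · have h1 : ofLex (|g| + |g|) i₀ = ofLex |g| i₀ + ofLex |g| i₀ := by
        rw [ofLex_add, Finsupp.add_apply]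
      rw [h1, ofLex_toLex, Finsupp.single_apply]
      split_ifs <;> omega
  have h0le : (0 : Lex (Γ →₀ ℤ)) ≤ |g| + |g| :=
    add_nonneg (abs_nonneg g) (abs_nonneg g)
  refine hH.2.2.2 _ hgg _ ?_
  rw [aux_abs_single, abs_of_nonneg h0le]
  exact hlt.le

end Aux

/-- For every linear order `Γ`, the map `Δ ↦ H_Δ` is an inclusion-preserving bijection from the
end segments of `Γ` onto the convex subgroups of `G = Lex (Γ →₀ ℤ)`. -/
theorem stmt_0 {Γ : Type*} [LinearOrder Γ] :
    (∀ Δ : Set Γ, IsEndSegment Δ → IsConvexSubgroup (HSeg Δ)) ∧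
    (∀ Δ Δ' : Set Γ, IsEndSegment Δ → IsEndSegment Δ' → (Δ ⊆ Δ' ↔ HSeg Δ ⊆ HSeg Δ')) ∧
    (∀ H : Set (Lex (Γ →₀ ℤ)), IsConvexSubgroup H →
      ∃! Δ : Set Γ, IsEndSegment Δ ∧ HSeg Δ = H) := by
  have hsingle_mem : ∀ (Δ : Set Γ) (i : Γ), i ∈ Δ →
      toLex (Finsupp.single i (1 : ℤ)) ∈ HSeg Δ := by
    intro Δ i hi x hx
    simp only [ofLex_toLex, Finset.coe_subset] at hx ⊢
    have := Finsupp.support_single_subset (a := i) (b := (1 : ℤ)) hx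
    simp only [Finset.mem_singleton] at this
    exact this ▸ hi
  have hmem_single : ∀ (Δ : Set Γ) (i : Γ),
      toLex (Finsupp.single i (1 : ℤ)) ∈ HSeg Δ → i ∈ Δ := by
    intro Δ i h
    exact h (by simp [Finsupp.single_apply])
  refine ⟨?_, ?_, ?_⟩
  · -- each `H_Δ` is a convex subgroup
    intro Δ hΔ
    refine ⟨?_, ?_, ?_, ?_⟩
    · intro x hx; simp at hx
    · intro a ha b hb x hx
      rw [ofLex_add] at hx
      rcases Finset.mem_union.mp (Finsupp.support_add (Finset.mem_coe.mp hx)) with h | h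
      · exact ha h
      · exact hb h
    · intro a ha x hx
      rw [ofLex_neg, Finsupp.support_neg] at hx
      exact ha hx
    · intro g hg h hle x hx
      obtain ⟨j, hj, hjx⟩ := aux_key hle (Finset.mem_coe.mp hx)
      exact hΔ (hg hj) hjx
  · -- inclusion preserving
    intro Δ Δ' _ _
    constructor
    · intro hsub g hg x hx
      exact hsub (hg hx)
    · intro hsub i hi
      exact hmem_single Δ' i (hsub (hsingle_mem Δ i hi))
  · -- bijectivity onto convex subgroups
    intro H hH
    refine ⟨{i | toLex (Finsupp.single i (1 : ℤ)) ∈ H}, ⟨?_, ?_⟩, ?_⟩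
    · intro i j hi hij
      refine hH.2.2.2 _ hi _ ?_
      rw [aux_abs_single, aux_abs_single]
      exact aux_single_mono hij
    · ext g
      constructor
      · intro hg
        have := aux_mem_of_forall_single hH (ofLex g) (fun i hi => hg hi)
        simpa using this
      · intro hg x hx
        exact aux_single_mem_of_mem hH hg (Finset.mem_coe.mp hx)
    · rintro Δ' ⟨-, rfl⟩
      ext i
      constructor
      · intro hi
        exact hsingle_mem Δ' i hi
      · intro hi
        exact hmem_single Δ' i hi
end

section
/- Let Γ be a linear order and G = Lex(Γ →₀ ℤ). For all nonzero g, h ∈ G, there exists a natural number n with |g| ≤ n • |h| and |h| ≤ n • |g| if and only if the least element of the support of g equals the least element of the support of h. (Thus the archimedean classes of G are in canonical bijection with Γ, i.e., the archimedean spine of G is Γ.) -/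
/-- Key structural lemma: a nonzero element of `Lex (Γ →₀ ℤ)` has a least support
element `i`, with `|a|` vanishing below `i` and strictly positive at `i`. -/
lemma lex_key {Γ : Type*} [LinearOrder Γ] (a : Lex (Γ →₀ ℤ)) (ha : a ≠ 0) :
    ∃ i : Γ, (ofLex a).support.min = (i : WithTop Γ) ∧
      (∀ j, j < i → ofLex |a| j = 0) ∧ 0 < ofLex |a| i := by
  have hpos : 0 < |a| := abs_pos.mpr ha
  obtain ⟨i, hlt, hi⟩ := Finsupp.Lex.lt_iff.mp hpos
  have hlt' : ∀ j, j < i → ofLex |a| j = 0 := fun j hj => (hlt j hj).symm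
  have hi' : 0 < ofLex |a| i := hi
  refine ⟨i, ?_, hlt', hi'⟩
  have hsupp : (ofLex a).support = (ofLex |a|).support := by
    rcases abs_choice a with hc | hc
    · rw [hc]
    · rw [hc]
      have : ofLex (-a) = -(ofLex a) := rfl
      rw [this, Finsupp.support_neg]
  rw [hsupp]
  apply le_antisymm
  · exact Finset.min_le (Finsupp.mem_support_iff.mpr hi'.ne')
  · apply Finset.le_min
    intro b hb
    by_contra hbi
    push_neg at hbi
    have hbi' : b < i := WithTop.coe_lt_coe.mp hbi
    exact Finsupp.mem_support_iff.mp hb (hlt' b hbi')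

/-- If the least support element of `g` is strictly below that of `h`, then
`n • |h| < |g|` for every `n`. -/
lemma lex_dominates {Γ : Type*} [LinearOrder Γ] {g h : Lex (Γ →₀ ℤ)} {i j : Γ}
    (hgi : ∀ k, k < i → ofLex |g| k = 0) (hgi' : 0 < ofLex |g| i)
    (hhj : ∀ k, k < j → ofLex |h| k = 0) (hij : i < j) (n : ℕ) :
    n • |h| < |g| := by
  rw [Finsupp.Lex.lt_iff]
  refine ⟨i, fun k hk => ?_, ?_⟩
  · have h1 : ofLex (n • |h|) k = n • ofLex |h| k := rfl
    rw [h1, hhj k (hk.trans hij), hgi k hk, smul_zero]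
  · have h1 : ofLex (n • |h|) i = n • ofLex |h| i := rfl
    rw [h1, hhj i hij, smul_zero]
    exact hgi'

/-- Let `Γ` be a linear order and `G = Lex (Γ →₀ ℤ)`. For all nonzero `g, h ∈ G`, there is
`n : ℕ` with `|g| ≤ n • |h|` and `|h| ≤ n • |g|` (archimedean equivalence) if and only if the
least element of the support of `g` equals the least element of the support of `h`. -/
theorem stmt_1 {Γ : Type*} [LinearOrder Γ] (g h : Lex (Γ →₀ ℤ)) (hg : g ≠ 0) (hh : h ≠ 0) :
    (∃ n : ℕ, |g| ≤ n • |h| ∧ |h| ≤ n • |g|) ↔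
      (ofLex g).support.min = (ofLex h).support.min := by
  obtain ⟨i, hgmin, hgi, hgi'⟩ := lex_key g hg
  obtain ⟨j, hhmin, hhj, hhj'⟩ := lex_key h hh
  constructor
  · rintro ⟨n, hn1, hn2⟩
    rcases lt_trichotomy i j with hij | hij | hij
    · exact absurd hn1 (not_le.mpr (lex_dominates hgi hgi' hhj hij n))
    · rw [hgmin, hhmin, hij]
    · exact absurd hn2 (not_le.mpr (lex_dominates hhj hhj' hgi hij n))
  · intro hmin
    rw [hgmin, hhmin] at hmin
    have hij : i = j := WithTop.coe_injective hmin
    subst hij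
    set A := ofLex |g| i with hA
    set B := ofLex |h| i with hB
    refine ⟨(A + B).toNat, le_of_lt ?_, le_of_lt ?_⟩
    · rw [Finsupp.Lex.lt_iff]
      refine ⟨i, fun k hk => ?_, ?_⟩
      · have h1 : ofLex ((A + B).toNat • |h|) k = (A + B).toNat • ofLex |h| k := rfl
        rw [h1, hhj k hk, hgi k hk, smul_zero]
      · have h1 : ofLex ((A + B).toNat • |h|) i = (A + B).toNat • ofLex |h| i := rfl
        rw [h1, nsmul_eq_mul]
        have hcast : ((A + B).toNat : ℤ) = A + B :=
          Int.toNat_of_nonneg (by positivity)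
        rw [hcast]
        nlinarith [hgi', hhj']
    · rw [Finsupp.Lex.lt_iff]
      refine ⟨i, fun k hk => ?_, ?_⟩
      · have h1 : ofLex ((A + B).toNat • |g|) k = (A + B).toNat • ofLex |g| k := rfl
        rw [h1, hhj k hk, hgi k hk, smul_zero]
      · have h1 : ofLex ((A + B).toNat • |g|) i = (A + B).toNat • ofLex |g| i := rfl
        rw [h1, nsmul_eq_mul]
        have hcast : ((A + B).toNat : ℤ) = A + B :=
          Int.toNat_of_nonneg (by positivity)
        rw [hcast]
        nlinarith [hgi', hhj']
end

section
/- Let Γ be a linear order, G = Lex(Γ →₀ ℤ), and let g ∈ G be nonzero with i the least element of the support of g. Then the set A = {h ∈ G | h = 0 ∨ i < least element of the support of h} is a convex subgroup of G not containing g, and every convex subgroup of G not containing g is contained in A; i.e., A is the largest convex subgroup A(g) of G not containing g. -/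
theorem Finsupp.lt_of_forall_lt_of_lt_s2 {α N : Type*} [LinearOrder α] [Zero N] [LT N]
    (a b : Lex (α →₀ N)) (i : α) :
    (∀ j < i, ofLex a j = ofLex b j) → ofLex a i < ofLex b i → a < b :=
  fun h1 h2 => Finsupp.Lex.lt_iff.mpr ⟨i, h1, h2⟩

private theorem mem_char' {Γ : Type*} [LinearOrder Γ] (h : Lex (Γ →₀ ℤ)) (i : Γ) :
    (h = 0 ∨ (i : WithBot Γ) < (ofLex h).support.min) ↔ ∀ j ≤ i, ofLex h j = 0 := by
  constructor
  · rintro (rfl | hlt) j hj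
    · rfl
    · by_contra hne
      have hjs : j ∈ (ofLex h).support := Finsupp.mem_support_iff.mpr hne
      obtain ⟨m, hm⟩ := Finset.min_of_mem hjs
      have h1 : m ≤ j := Finset.min_le_of_eq hjs hm
      rw [hm] at hlt
      exact absurd ((WithBot.coe_lt_coe.mp hlt).trans_le h1) (not_lt.mpr hj)
  · intro hall
    rcases eq_or_ne h 0 with rfl | hne
    · exact Or.inl rfl
    right
    have hs : (ofLex h).support.Nonempty := Finsupp.support_nonempty_iff.mpr
      (fun h0 => hne (congrArg toLex h0))
    obtain ⟨m, hm⟩ := Finset.min_of_nonempty hs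
    have hmem : m ∈ (ofLex h).support := Finset.mem_of_min hm
    have him : i < m := not_le.mp (fun hle => (Finsupp.mem_support_iff.mp hmem) (hall m hle))
    exact lt_of_lt_of_eq (WithBot.coe_lt_coe.mpr him) hm.symm

/-- For nonzero `h`, `|h|` is positive at the minimum of the support of `h`, zero below it,
and has the same absolute value there as `h`. -/
private theorem abs_lead {Γ : Type*} [LinearOrder Γ] (h : Lex (Γ →₀ ℤ)) (hne : h ≠ 0) :
    ∃ m : Γ, (ofLex h).support.min = (m : WithBot Γ) ∧ 0 < ofLex |h| m ∧
      (∀ j < m, ofLex |h| j = 0) ∧ |ofLex |h| m| = |ofLex h m| := by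
  have hs : (ofLex h).support.Nonempty := Finsupp.support_nonempty_iff.mpr
    (fun h0 => hne (congrArg toLex h0))
  obtain ⟨m, hm⟩ := Finset.min_of_nonempty hs
  refine ⟨m, hm, ?_⟩
  have hsupp : ∀ j, ofLex |h| j = ofLex h j ∨ ofLex |h| j = -(ofLex h j) := by
    rcases abs_choice h with hc | hc <;> intro j <;> rw [hc] <;> simp
  have hbelow : ∀ j < m, ofLex |h| j = 0 := by
    intro j hj
    have hj0 : ofLex h j = 0 := by
      by_contra hne'
      have := Finset.min_le_of_eq (Finsupp.mem_support_iff.mpr hne') hm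
      exact absurd hj (not_lt.mpr this)
    rcases hsupp j with e | e <;> rw [e, hj0] <;> simp
  have habs : |ofLex |h| m| = |ofLex h m| := by
    rcases hsupp m with e | e <;> rw [e] <;> simp
  have hm0 : ofLex h m ≠ 0 := Finsupp.mem_support_iff.mp (Finset.mem_of_min hm)
  have habsne : |h| ≠ 0 := abs_ne_zero.mpr hne
  have habspos : (0 : Lex (Γ →₀ ℤ)) < |h| := (abs_nonneg h).lt_of_ne (Ne.symm habsne)
  obtain ⟨j, hj1, hj2⟩ := Finsupp.lex_def.mp habspos
  have hj2' : 0 < ofLex |h| j := hj2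
  have hjm : j = m := by
    rcases lt_trichotomy j m with hc | hc | hc
    · exact absurd (hbelow j hc) (ne_of_gt hj2')
    · exact hc
    · have h0 : ofLex |h| m = 0 := (hj1 m hc).symm
      rcases hsupp m with e | e <;> rw [e] at h0
      · exact absurd h0 hm0
      · exact absurd (neg_eq_zero.mp h0) hm0
  exact ⟨hjm ▸ hj2', hbelow, habs⟩

/-- Let `g ∈ G = Lex (Γ →₀ ℤ)` be nonzero with `i` the least element of its support. Then
`A = {h | h = 0 ∨ i < least element of the support of h}` is a convex subgroup of `G` not
containing `g`, and every convex subgroup of `G` not containing `g` is contained in `A`;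
i.e. `A` is the largest convex subgroup `A(g)` of `G` not containing `g`. -/
theorem stmt_2 {Γ : Type*} [LinearOrder Γ] (g : Lex (Γ →₀ ℤ)) (hg : g ≠ 0) (i : Γ)
    (hi : (ofLex g).support.min = (i : WithBot Γ)) :
    IsConvexSubgroup {h : Lex (Γ →₀ ℤ) | h = 0 ∨ (i : WithBot Γ) < (ofLex h).support.min} ∧
    g ∉ {h : Lex (Γ →₀ ℤ) | h = 0 ∨ (i : WithBot Γ) < (ofLex h).support.min} ∧
    ∀ H : Set (Lex (Γ →₀ ℤ)), IsConvexSubgroup H → g ∉ H →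
      H ⊆ {h : Lex (Γ →₀ ℤ) | h = 0 ∨ (i : WithBot Γ) < (ofLex h).support.min} := by
  -- rewrite membership in A via mem_char'
  have memA : ∀ h : Lex (Γ →₀ ℤ),
      h ∈ {h : Lex (Γ →₀ ℤ) | h = 0 ∨ (i : WithBot Γ) < (ofLex h).support.min}
        ↔ ∀ j ≤ i, ofLex h j = 0 := fun h => mem_char' h i
  refine ⟨⟨?_, ?_, ?_, ?_⟩, ?_, ?_⟩
  · exact Or.inl rfl
  · -- closed under addition
    intro a ha b hb
    rw [memA] at ha hb ⊢
    intro j hj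
    have : ofLex (a + b) j = ofLex a j + ofLex b j := rfl
    rw [this, ha j hj, hb j hj, add_zero]
  · -- closed under negation
    intro a ha
    rw [memA] at ha ⊢
    intro j hj
    have : ofLex (-a) j = -(ofLex a j) := rfl
    rw [this, ha j hj, neg_zero]
  · -- convexity
    intro a ha h hle
    rw [memA] at ha ⊢
    rcases eq_or_ne h 0 with rfl | hne
    · intro j _; rfl
    obtain ⟨m, hmmin, hmpos, hbelow, _⟩ := abs_lead h hne
    intro j hj
    by_contra hne'
    -- m is the min of support of h, and m ≤ j ≤ i
    have hjmem : j ∈ (ofLex h).support := Finsupp.mem_support_iff.mpr hne'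
    have hmj : m ≤ j := Finset.min_le_of_eq hjmem hmmin
    have hmi : m ≤ i := hmj.trans hj
    -- show |a| < |h| contradicting |h| ≤ |a|
    have hazero : ∀ k ≤ i, ofLex |a| k = 0 := by
      intro k hk
      rcases abs_choice a with hc | hc
      · rw [hc]; exact ha k hk
      · rw [hc]
        have : ofLex (-a) k = -(ofLex a k) := rfl
        rw [this, ha k hk, neg_zero]
    have hlt : |a| < |h| := Finsupp.lt_of_forall_lt_of_lt_s2 _ _ m
      (fun k hk => by rw [hazero k ((hk.le.trans hmj).trans hj), hbelow k hk])
      (by rw [hazero m hmi]; exact hmpos)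
    exact absurd hle (not_le.mpr hlt)
  · -- g ∉ A
    intro hgA
    rw [memA] at hgA
    have : ofLex g i = 0 := hgA i le_rfl
    exact (Finsupp.mem_support_iff.mp (Finset.mem_of_min hi)) this
  · -- maximality
    intro H hH hgH h hhH
    obtain ⟨h0H, haddH, hnegH, hconv⟩ := hH
    rw [Set.mem_setOf_eq, mem_char']
    intro j hj
    by_contra hne'
    have hne : h ≠ 0 := by
      intro h0; rw [h0] at hne'; exact hne' rfl
    obtain ⟨m, hmmin, hmpos, hbelow, _⟩ := abs_lead h hne
    have hjmem : j ∈ (ofLex h).support := Finsupp.mem_support_iff.mpr hne'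
    have hmj : m ≤ j := Finset.min_le_of_eq hjmem hmmin
    have hmi : m ≤ i := hmj.trans hj
    -- leading data of g
    obtain ⟨mg, hgmin, hgpos, hgbelow, _⟩ := abs_lead g hg
    have hmg : mg = i := by
      rw [hgmin] at hi
      exact WithBot.coe_injective hi
    rw [hmg] at hgpos hgbelow
    -- the multiple k • h ∈ H
    set k : ℕ := (ofLex |g| i).natAbs + 1 with hk
    have hkH : k • h ∈ H := by
      have : ∀ n : ℕ, n • h ∈ H := by
        intro n
        induction n with
        | zero => simpa using h0H
        | succ n ih =>
          have : (n + 1) • h = n • h + h := succ_nsmul h n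
          rw [this]
          exact haddH _ ih _ hhH
      exact this k
    -- |g| ≤ |k • h|
    have habs_smul : |k • h| = k • |h| := abs_nsmul k h
    have hsmul_apply : ∀ x : Lex (Γ →₀ ℤ), ∀ l : Γ, ofLex (k • x) l = k • ofLex x l :=
      fun _ _ => rfl
    have hglt : |g| < |k • h| := by
      rw [habs_smul]
      rcases lt_or_eq_of_le hmi with hlt' | heq
      · -- m < i : first difference at m
        refine Finsupp.lt_of_forall_lt_of_lt_s2 _ _ m (fun l hl => ?_) ?_
        · rw [hsmul_apply, hbelow l hl, hgbelow l (hl.trans hlt'), smul_zero]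
        · rw [hsmul_apply, hgbelow m hlt']
          positivity
      · -- m = i : first difference at i = mg
        subst heq
        refine Finsupp.lt_of_forall_lt_of_lt_s2 _ _ m (fun l hl => ?_) ?_
        · rw [hsmul_apply, hbelow l hl, hgbelow l hl, smul_zero]
        · rw [hsmul_apply]
          have h1 : (1 : ℤ) ≤ ofLex |h| m := hmpos
          have h2 : ofLex |g| m < (k : ℤ) := by
            have := Int.natAbs_eq (ofLex |g| m)
            have hnn : 0 ≤ ofLex |g| m := le_of_lt hgpos
            omega
          calc ofLex |g| m < (k : ℤ) := h2
            _ = (k : ℤ) * 1 := (mul_one _).symm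
            _ ≤ (k : ℤ) * ofLex |h| m := by
                apply mul_le_mul_of_nonneg_left h1 (by positivity)
            _ = k • ofLex |h| m := (nsmul_eq_mul _ _).symm
    exact hgH (hconv _ hkH g hglt.le)
end

section
/- Let Γ be a linear order, n ≥ 2 an integer, G = Lex(Γ →₀ ℤ), and let g ∈ G be an element that is not of the form n • x. Let i₀ be the least element of the (nonempty, finite) set {j ∈ Γ | g j is not divisible by n}. Then the convex subgroup F = {h ∈ G | support h ⊆ {j ∈ Γ | i₀ < j}} is disjoint from the coset g + nG, and every convex subgroup of G disjoint from g + nG is contained in F; i.e., F is the largest convex subgroup F_n(g) of G whose intersection with g + nG is empty. -/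
section Aux

variable {Γ : Type*} [LinearOrder Γ]

lemma lexlt_aux {u v : Γ →₀ ℤ} {j : Γ} (h1 : ∀ d < j, u d = v d) (h2 : u j < v j) :
    toLex u < toLex v := ⟨j, h1, h2⟩

lemma abs_apply_eq_zero_aux (x : Lex (Γ →₀ ℤ)) (i : Γ) :
    ofLex |x| i = 0 ↔ ofLex x i = 0 := by
  rcases abs_choice x with h | h <;> rw [h] <;> simp

/-- If `0 ≤ u ≤ v` lexicographically and `v` vanishes at all indices `≤ j₀`,
so does `u`. -/
lemma zero_below_aux {u v : Γ →₀ ℤ} {j₀ : Γ} (hu : 0 ≤ toLex u) (huv : toLex u ≤ toLex v)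
    (hv : ∀ i ≤ j₀, v i = 0) : ∀ i ≤ j₀, u i = 0 := by
  by_contra hcon
  push_neg at hcon
  obtain ⟨i, hi, hne⟩ := hcon
  set S := u.support.filter (fun d => d ≤ j₀) with hS
  have hSne : S.Nonempty := ⟨i, by simp [hS, hi, hne]⟩
  set j := S.min' hSne with hj
  have hjS : j ∈ S := S.min'_mem hSne
  have hjsupp : u j ≠ 0 := by
    have := (Finset.mem_filter.mp hjS).1; simpa using this
  have hjle : j ≤ j₀ := (Finset.mem_filter.mp hjS).2
  have hbelow : ∀ d < j, u d = 0 := by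
    intro d hd
    by_contra hdne
    have hdS : d ∈ S := Finset.mem_filter.mpr ⟨Finsupp.mem_support_iff.mpr hdne, le_trans hd.le hjle⟩
    exact absurd (S.min'_le d hdS) (not_le.mpr hd)
  rcases lt_or_gt_of_ne hjsupp with hneg | hpos
  · -- u j < 0 : then toLex u < 0
    have : toLex u < toLex (0 : Γ →₀ ℤ) := by
      refine lexlt_aux (j := j) (fun d hd => by simp [hbelow d hd]) ?_
      simpa using hneg
    exact absurd hu (not_le.mpr (by simpa using this))
  · -- u j > 0 : then toLex v < toLex u
    have : toLex v < toLex u := by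
      refine lexlt_aux (j := j) (fun d hd => ?_) ?_
      · rw [hv d (le_trans hd.le hjle), hbelow d hd]
      · rw [hv j hjle]; exact hpos
    exact absurd huv (not_le.mpr this)

lemma nsmul_mem_aux {H : Set (Lex (Γ →₀ ℤ))} (hH : IsConvexSubgroup H) {x : Lex (Γ →₀ ℤ)}
    (hx : x ∈ H) : ∀ m : ℕ, m • x ∈ H := by
  intro m
  induction m with
  | zero => simpa using hH.1
  | succ k ih =>
      have := hH.2.1 _ ih _ hx
      simpa [succ_nsmul] using this

end Aux

/-- Let `n ≥ 2`, `G = Lex (Γ →₀ ℤ)`, and `g ∈ G` not of the form `n • x`. Let `i₀` be the least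
element of `{j | n ∤ g j}`. Then the convex subgroup `F = {h | support h ⊆ {j | i₀ < j}}` is
disjoint from the coset `g + nG`, and every convex subgroup of `G` disjoint from `g + nG` is
contained in `F`; i.e. `F` is the largest convex subgroup `F_n(g)` of `G` whose intersection
with `g + nG` is empty. -/
theorem stmt_3 {Γ : Type*} [LinearOrder Γ] (n : ℕ) (hn : 2 ≤ n) (g : Lex (Γ →₀ ℤ))
    (hg : ¬ ∃ x : Lex (Γ →₀ ℤ), g = n • x) (i₀ : Γ)
    (hi₀ : ¬ (n : ℤ) ∣ ofLex g i₀)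
    (hleast : ∀ j : Γ, ¬ (n : ℤ) ∣ ofLex g j → i₀ ≤ j) :
    IsConvexSubgroup {h : Lex (Γ →₀ ℤ) | ↑(ofLex h).support ⊆ {j : Γ | i₀ < j}} ∧
    (∀ x ∈ {h : Lex (Γ →₀ ℤ) | ↑(ofLex h).support ⊆ {j : Γ | i₀ < j}},
      ¬ ∃ y : Lex (Γ →₀ ℤ), x = g + n • y) ∧
    ∀ H : Set (Lex (Γ →₀ ℤ)), IsConvexSubgroup H →
      (∀ x ∈ H, ¬ ∃ y : Lex (Γ →₀ ℤ), x = g + n • y) →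
      H ⊆ {h : Lex (Γ →₀ ℤ) | ↑(ofLex h).support ⊆ {j : Γ | i₀ < j}} := by
  have hn0 : (n : ℤ) ≠ 0 := by positivity
  have hnpos : (0 : ℤ) < n := by positivity
  -- membership in F rephrased
  have hmemF : ∀ x : Lex (Γ →₀ ℤ),
      (↑(ofLex x).support ⊆ {j : Γ | i₀ < j}) ↔ ∀ i ≤ i₀, ofLex x i = 0 := by
    intro x
    constructor
    · intro hx i hi
      by_contra hne
      have : i ∈ (ofLex x).support := Finsupp.mem_support_iff.mpr hne
      have : i₀ < i := hx this
      exact absurd hi (not_le.mpr this)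
    · intro hx j hj
      simp only [Finset.coe_sort_coe, Set.mem_setOf_eq]
      by_contra hle
      push_neg at hle
      exact (Finsupp.mem_support_iff.mp hj) (hx j hle)
  refine ⟨⟨by simp, ?_, ?_, ?_⟩, ?_, ?_⟩
  · -- closed under addition
    intro a ha b hb
    rw [Set.mem_setOf_eq, hmemF] at ha hb ⊢
    intro i hi
    have : ofLex (a + b) i = ofLex a i + ofLex b i := rfl
    rw [this, ha i hi, hb i hi, add_zero]
  · -- closed under negation
    intro a ha
    rw [Set.mem_setOf_eq, hmemF] at ha ⊢
    intro i hi
    have : ofLex (-a) i = -(ofLex a i) := rfl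
    rw [this, ha i hi, neg_zero]
  · -- convexity
    intro a ha h hle
    rw [Set.mem_setOf_eq, hmemF] at ha ⊢
    intro i hi
    have hva : ∀ i ≤ i₀, ofLex |a| i = 0 := fun i hi =>
      (abs_apply_eq_zero_aux a i).mpr (ha i hi)
    have := zero_below_aux (u := ofLex |h|) (v := ofLex |a|)
      (by simpa using abs_nonneg h) (by simpa using hle) hva i hi
    exact (abs_apply_eq_zero_aux h i).mp this
  · -- F disjoint from coset
    rintro x hx ⟨y, rfl⟩
    rw [Set.mem_setOf_eq, hmemF] at hx
    have h0 : ofLex (g + n • y) i₀ = ofLex g i₀ + n * ofLex y i₀ := by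
      simp [nsmul_eq_mul]
      exact (by simp [nsmul_eq_mul] : (n • ofLex y) i₀ = ↑n * ofLex y i₀)
    have := hx i₀ le_rfl
    rw [h0] at this
    exact hi₀ ⟨-(ofLex y i₀), by linarith⟩
  · -- maximality
    intro H hH hdisj x hx
    rw [Set.mem_setOf_eq, hmemF]
    by_contra hcon
    push_neg at hcon
    obtain ⟨i, hi, hne⟩ := hcon
    -- least index ≤ i₀ in the support of x
    set S := (ofLex x).support.filter (fun d => d ≤ i₀) with hS
    have hSne : S.Nonempty := ⟨i, by simp [hS, hi, hne]⟩
    set j := S.min' hSne with hj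
    have hjS : j ∈ S := S.min'_mem hSne
    have hjsupp : ofLex x j ≠ 0 := by
      have := (Finset.mem_filter.mp hjS).1; simpa using this
    have hjle : j ≤ i₀ := (Finset.mem_filter.mp hjS).2
    have hbelow : ∀ d < j, ofLex x d = 0 := by
      intro d hd
      by_contra hdne
      have hdS : d ∈ S :=
        Finset.mem_filter.mpr ⟨Finsupp.mem_support_iff.mpr hdne, le_trans hd.le hjle⟩
      exact absurd (S.min'_le d hdS) (not_le.mpr hd)
    -- the remainder element h
    set h : Γ →₀ ℤ := (ofLex g).mapRange (fun a => a % n) (by simp) with hhdef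
    have happly : ∀ i, h i = ofLex g i % n := fun i => by simp [hhdef]
    set y : Γ →₀ ℤ := (ofLex g).mapRange (fun a => -(a / n)) (by simp) with hydef
    have hyapply : ∀ i, y i = -(ofLex g i / n) := fun i => by simp [hydef]
    have hcoset : toLex h = g + n • toLex y := by
      have key : h = ofLex g + n • y := by
        ext i
        simp only [Finsupp.add_apply, Finsupp.smul_apply, happly, hyapply, smul_eq_mul,
          nsmul_eq_mul]
        rw [Int.emod_def]; ring
      calc toLex h = toLex (ofLex g + n • y) := by rw [key]
        _ = g + n • toLex y := rfl
    have hblow : ∀ d < j, h d = 0 := by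
      intro d hd
      have hdvd : (n : ℤ) ∣ ofLex g d := by
        by_contra hnd
        exact absurd (lt_of_lt_of_le hd hjle) (not_lt.mpr (hleast d hnd))
      rw [happly]; exact Int.emod_eq_zero_of_dvd hdvd
    have hnonneg : ∀ i, 0 ≤ h i := fun i => by rw [happly]; exact Int.emod_nonneg _ hn0
    have hltn : ∀ i, h i < n := fun i => by rw [happly]; exact Int.emod_lt_of_pos _ hnpos
    have h0le : (0 : Lex (Γ →₀ ℤ)) ≤ toLex h := by
      have hle0 : (0 : Γ →₀ ℤ) ≤ h := Finsupp.le_def.mpr (fun i => by simpa using hnonneg i)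
      simpa using Finsupp.toLex_monotone hle0
    set w := ofLex |x| with hw
    have hwbelow : ∀ d < j, w d = 0 := fun d hd =>
      (abs_apply_eq_zero_aux x d).mpr (hbelow d hd)
    have hwj : w j ≠ 0 := fun h0 => hjsupp ((abs_apply_eq_zero_aux x j).mp h0)
    have hwpos : 0 < w j := by
      rcases lt_or_gt_of_ne hwj with hneg | hpos
      · exfalso
        have hlt : toLex w < toLex (0 : Γ →₀ ℤ) :=
          lexlt_aux (fun d hd => by simp [hwbelow d hd]) (by simpa using hneg)
        have h2 : |x| < 0 := by simpa [hw] using hlt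
        exact absurd (abs_nonneg x) (not_le.mpr h2)
      · exact hpos
    have hcomp : toLex h < n • |x| := by
      have hlt : toLex h < toLex (n • w) := by
        refine lexlt_aux (j := j) (fun d hd => ?_) ?_
        · rw [hblow d hd]
          simp [hwbelow d hd]
        · have h1 : (1 : ℤ) ≤ w j := hwpos
          have h2 : (n : ℤ) ≤ n * w j := le_mul_of_one_le_right (by positivity) h1
          have h3 : (n • w) j = n * w j := by simp [nsmul_eq_mul]
          rw [h3]
          exact lt_of_lt_of_le (hltn j) h2
      have : toLex (n • w) = n • |x| := rfl
      rwa [this] at hlt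
    have hmem : toLex h ∈ H := by
      have hx2 : (n • x) ∈ H := nsmul_mem_aux hH hx n
      refine hH.2.2.2 _ hx2 _ ?_
      rw [abs_of_nonneg h0le, abs_nsmul]
      exact le_of_lt hcomp
    exact hdisj _ hmem ⟨toLex y, hcoset⟩
end

section
/- Let Γ be a linear order, n ≥ 2 an integer, and G = Lex(Γ →₀ ℤ). Then the family {A(g) | g ∈ G, g ≠ 0} of largest convex subgroups avoiding a nonzero element coincides with the family {F_n(g) | g ∈ G, g ∉ nG} of n-fundaments, and both coincide with the family {H_{>i} | i ∈ Γ}, where H_{>i} = {h ∈ G | support h ⊆ {j ∈ Γ | i < j}}. Moreover the map i ↦ H_{>i} is an order-reversing bijection from Γ onto this family ordered by inclusion: i < j if and only if H_{>j} ⊊ H_{>i}. -/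
/-- `H` is `A(g)` for some nonzero `g`: the largest convex subgroup of `G` not containing `g`. -/
def IsLargestAvoiding {Γ : Type*} [LinearOrder Γ] (H : Set (Lex (Γ →₀ ℤ))) : Prop :=
  ∃ g : Lex (Γ →₀ ℤ), g ≠ 0 ∧ IsConvexSubgroup H ∧ g ∉ H ∧
    ∀ H' : Set (Lex (Γ →₀ ℤ)), IsConvexSubgroup H' → g ∉ H' → H' ⊆ H

/-- `H` is `F_n(g)` for some `g ∉ nG`: the largest convex subgroup of `G` disjoint from the
coset `g + nG`. -/
def IsFundament {Γ : Type*} [LinearOrder Γ] (n : ℕ) (H : Set (Lex (Γ →₀ ℤ))) : Prop :=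
  ∃ g : Lex (Γ →₀ ℤ), (¬ ∃ x : Lex (Γ →₀ ℤ), g = n • x) ∧ IsConvexSubgroup H ∧
    (∀ x ∈ H, ¬ ∃ y : Lex (Γ →₀ ℤ), x = g + n • y) ∧
    ∀ H' : Set (Lex (Γ →₀ ℤ)), IsConvexSubgroup H' →
      (∀ x ∈ H', ¬ ∃ y : Lex (Γ →₀ ℤ), x = g + n • y) → H' ⊆ H

/-- `H_{>i} = {h ∈ G | support h ⊆ {j | i < j}}`. -/
def Hgt {Γ : Type*} [LinearOrder Γ] (i : Γ) : Set (Lex (Γ →₀ ℤ)) :=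
  {h | ↑(ofLex h).support ⊆ {j : Γ | i < j}}

namespace AuxStmt4
variable {Γ : Type*} [LinearOrder Γ]

variable {Γ : Type*} [LinearOrder Γ]

lemma mem_Hgt {i : Γ} {h : Lex (Γ →₀ ℤ)} : h ∈ Hgt i ↔ ∀ j ≤ i, ofLex h j = 0 := by
  constructor
  · intro hm j hj
    by_contra hne
    exact absurd (hm (by simpa [Finsupp.mem_support_iff] using hne)) (by simpa using hj)
  · intro hm j hj
    simp only [Finset.coe_subset, Set.mem_setOf_eq]
    rcases lt_or_ge i j with h' | h'
    · exact h'
    · exact absurd (hm j h') (by simpa [Finsupp.mem_support_iff] using hj)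

omit [LinearOrder Γ] in
lemma nsmul_apply (m : ℕ) (x : Lex (Γ →₀ ℤ)) (j : Γ) :
    ofLex (m • x) j = m * ofLex x j := by
  induction m with
  | zero => simp [show ofLex ((0 : ℕ) • x) j = ofLex (0 : Lex (Γ →₀ ℤ)) j from by rw [zero_smul]]
  | succ k ih =>
    rw [succ_nsmul]
    show ofLex (k • x) j + ofLex x j = _
    rw [ih]; push_cast; ring

lemma abs_apply_eq_zero_iff {h : Lex (Γ →₀ ℤ)} {j : Γ} :
    ofLex |h| j = 0 ↔ ofLex h j = 0 := by
  rcases abs_choice h with e | e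
  · rw [e]
  · rw [e]
    show -(ofLex h j) = 0 ↔ _
    simp

lemma pos_apply_min {h : Lex (Γ →₀ ℤ)} (hpos : 0 < h) {j : Γ}
    (hmin : ∀ k < j, ofLex h k = 0) (hjne : ofLex h j ≠ 0) : 0 < ofLex h j := by
  obtain ⟨w, hw1, hw2⟩ := Finsupp.Lex.lt_iff.mp hpos
  rcases lt_trichotomy w j with hc | hc | hc
  · have h1 : (0 : ℤ) < ofLex h w := hw2
    rw [hmin w hc] at h1
    omega
  · subst hc; exact hw2
  · have h1 : (0 : ℤ) = ofLex h j := hw1 j hc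
    exact absurd h1.symm hjne

/-- If `0 < a ≤ b` and `b` vanishes at and below `i`, so does `a`. -/
lemma core {a b : Lex (Γ →₀ ℤ)} (ha : 0 < a) (hab : a ≤ b) {i : Γ}
    (hb : ∀ j ≤ i, ofLex b j = 0) : ∀ j ≤ i, ofLex a j = 0 := by
  obtain ⟨w, hw1, hw2⟩ := Finsupp.Lex.lt_iff.mp ha
  have hw2' : 0 < ofLex a w := by simpa using hw2
  have hw0 : ∀ k < w, ofLex a k = 0 := fun k hk => by
    have := hw1 k hk; simpa using this.symm
  intro j hj
  by_contra hja
  have hwj : w ≤ j := not_lt.mp fun hc => hja (hw0 j hc)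
  have : b < a := Finsupp.Lex.lt_iff.mpr ⟨w, fun k hk => by
      rw [hb k (le_of_lt (lt_of_lt_of_le hk (hwj.trans hj))), hw0 k hk],
    by rw [hb w (hwj.trans hj)]; exact hw2'⟩
  exact absurd this (not_lt.mpr hab)

lemma Hgt_convex (i : Γ) : IsConvexSubgroup (Hgt i) := by
  refine ⟨mem_Hgt.mpr fun j _ => rfl, ?_, ?_, ?_⟩
  · intro a ha b hb
    rw [mem_Hgt] at *
    intro j hj
    show ofLex a j + ofLex b j = 0
    rw [ha j hj, hb j hj, add_zero]
  · intro a ha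
    rw [mem_Hgt] at *
    intro j hj
    show -(ofLex a j) = 0
    rw [ha j hj, neg_zero]
  · intro g hg h hle
    rw [mem_Hgt] at *
    rcases eq_or_ne h 0 with rfl | hne
    · intro j _; rfl
    · have hpos : 0 < |h| := abs_pos.mpr hne
      have hgabs : ∀ j ≤ i, ofLex |g| j = 0 := fun j hj =>
        abs_apply_eq_zero_iff.mpr (hg j hj)
      intro j hj
      exact abs_apply_eq_zero_iff.mp (core hpos hle hgabs j hj)

/-- Key maximality argument: if `H'` is a convex subgroup containing some `h ∉ Hgt i`,
then every `g'` vanishing below `i` belongs to `H'`. -/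
lemma mem_of_convex {H' : Set (Lex (Γ →₀ ℤ))} (hH' : IsConvexSubgroup H')
    {h : Lex (Γ →₀ ℤ)} (hh : h ∈ H') {i : Γ} (hnot : h ∉ Hgt i)
    {g' : Lex (Γ →₀ ℤ)} (hg' : ∀ j < i, ofLex g' j = 0) : g' ∈ H' := by
  obtain ⟨h0, hadd, hneg, hconv⟩ := hH'
  rw [mem_Hgt] at hnot
  push_neg at hnot
  obtain ⟨j', hj'i, hj'⟩ := hnot
  have hsupp : (ofLex h).support.Nonempty := ⟨j', Finsupp.mem_support_iff.mpr hj'⟩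
  set j := (ofLex h).support.min' hsupp with hjdef
  have hjmem : j ∈ (ofLex h).support := Finset.min'_mem _ _
  have hji : j ≤ i := le_trans (Finset.min'_le _ _ (Finsupp.mem_support_iff.mpr hj')) hj'i
  have hjne : ofLex h j ≠ 0 := Finsupp.mem_support_iff.mp hjmem
  have hmin : ∀ k < j, ofLex h k = 0 := by
    intro k hk
    by_contra hc
    exact absurd (Finset.min'_le _ _ (Finsupp.mem_support_iff.mpr hc)) (not_le.mpr hk)
  have hne : h ≠ 0 := fun e => hjne (by rw [e]; rfl)
  have habs : |h| ∈ H' := by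
    rcases abs_choice h with e | e <;> rw [e]
    · exact hh
    · exact hneg _ hh
  have habsmin : ∀ k < j, ofLex |h| k = 0 := fun k hk =>
    abs_apply_eq_zero_iff.mpr (hmin k hk)
  have habsjne : ofLex |h| j ≠ 0 := fun e => hjne (abs_apply_eq_zero_iff.mp e)
  have habspos : 0 < ofLex |h| j :=
    pos_apply_min (abs_pos.mpr hne) habsmin habsjne
  set m : ℕ := (ofLex g' i).natAbs + 1 with hmdef
  have hmH : ∀ k : ℕ, k • |h| ∈ H' := by
    intro k
    induction k with
    | zero => rw [zero_smul]; exact h0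
    | succ k ih => rw [succ_nsmul]; exact hadd _ ih _ habs
  have hg'bd : ofLex |g'| j ≤ (ofLex g' i).natAbs := by
    have : ofLex |g'| j = ofLex g' j ∨ ofLex |g'| j = -(ofLex g' j) := by
      rcases abs_choice g' with e | e <;> rw [e]
      · left; rfl
      · right; rfl
    rcases lt_or_eq_of_le hji with hc | hc
    · rcases this with e | e <;> rw [e, hg' j hc] <;> simp
    · subst hc
      rcases this with e | e
      · rw [e]; exact Int.le_natAbs
      · rw [e, ← Int.natAbs_neg]; exact Int.le_natAbs
  have key : |g'| < m • |h| := by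
    rw [Finsupp.Lex.lt_iff]
    refine ⟨j, fun k hk => ?_, ?_⟩
    · have hki : k < i := lt_of_lt_of_le hk hji
      rw [nsmul_apply, habsmin k hk, mul_zero,
        abs_apply_eq_zero_iff.mpr (hg' k hki)]
    · rw [nsmul_apply]
      have h1 : (1 : ℤ) ≤ ofLex |h| j := habspos
      have h2 : ((ofLex g' i).natAbs : ℤ) < m := by rw [hmdef]; push_cast; omega
      calc ofLex |g'| j ≤ ((ofLex g' i).natAbs : ℤ) := hg'bd
        _ < m := h2
        _ ≤ m * ofLex |h| j := le_mul_of_one_le_right (by positivity) h1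
  have hfin : |g'| ≤ abs (m • |h|) := by
    rw [abs_of_nonneg (nsmul_nonneg (abs_nonneg h) m)]
    exact le_of_lt key
  exact hconv _ (hmH m) _ hfin


variable {Γ : Type*} [LinearOrder Γ]


omit [LinearOrder Γ] in
lemma lex_ext {a b : Lex (Γ →₀ ℤ)} (h : ∀ j, ofLex a j = ofLex b j) : a = b :=
  ofLex.injective (Finsupp.ext h)

lemma isLargestAvoiding_iff {H : Set (Lex (Γ →₀ ℤ))} :
    IsLargestAvoiding H ↔ ∃ i, H = Hgt i := by
  constructor
  · rintro ⟨g, hg0, hHconv, hgH, hmax⟩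
    have hg0' : ofLex g ≠ 0 := fun e => hg0 (congrArg toLex e)
    have hsupp : (ofLex g).support.Nonempty := Finsupp.support_nonempty_iff.mpr hg0'
    set i := (ofLex g).support.min' hsupp with hidef
    have hine : ofLex g i ≠ 0 := Finsupp.mem_support_iff.mp (Finset.min'_mem _ _)
    have hbelow : ∀ j < i, ofLex g j = 0 := by
      intro j hj
      by_contra hc
      exact absurd (Finset.min'_le _ _ (Finsupp.mem_support_iff.mpr hc)) (not_le.mpr hj)
    have hgnot : g ∉ Hgt i := fun hc => hine (mem_Hgt.mp hc i le_rfl)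
    refine ⟨i, subset_antisymm ?_ (hmax _ (Hgt_convex i) hgnot)⟩
    intro h hh
    by_contra hn'
    exact hgH (mem_of_convex hHconv hh hn' hbelow)
  · rintro ⟨i, rfl⟩
    refine ⟨toLex (Finsupp.single i 1), ?_, Hgt_convex i, ?_, ?_⟩
    · intro e
      have : (Finsupp.single i (1:ℤ)) i = (0 : Γ →₀ ℤ) i := congrFun (congrArg _ (congrArg ofLex e)) i
      simp at this
    · intro hc
      have := mem_Hgt.mp hc i le_rfl
      simp [show ofLex (toLex (Finsupp.single i (1:ℤ))) = Finsupp.single i 1 from rfl] at this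
    · intro H' hH' hgH' h hh
      by_contra hn'
      refine hgH' (mem_of_convex hH' hh hn' ?_)
      intro j hj
      show Finsupp.single i (1:ℤ) j = 0
      exact Finsupp.single_eq_of_ne' (ne_of_gt hj)

lemma isFundament_iff {H : Set (Lex (Γ →₀ ℤ))} {n : ℕ} (hn : 2 ≤ n) :
    IsFundament n H ↔ ∃ i, H = Hgt i := by
  constructor
  · rintro ⟨g, hgn, hHconv, hdisj, hmax⟩
    set S := (ofLex g).support.filter (fun j => ¬ (n:ℤ) ∣ ofLex g j) with hS
    have hSne : S.Nonempty := by
      by_contra hc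
      rw [Finset.not_nonempty_iff_eq_empty] at hc
      have hall : ∀ j, (n:ℤ) ∣ ofLex g j := by
        intro j
        by_contra hd
        have hj : j ∈ (ofLex g).support :=
          Finsupp.mem_support_iff.mpr (fun e => hd (e ▸ dvd_zero _))
        have : j ∈ S := Finset.mem_filter.mpr ⟨hj, hd⟩
        simp [hc] at this
      refine hgn ⟨toLex ((ofLex g).mapRange (fun z => z / (n:ℤ)) (by simp)), lex_ext fun j => ?_⟩
      rw [nsmul_apply]
      show ofLex g j = n * ((ofLex g).mapRange (fun z => z / (n:ℤ)) (by simp) j)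
      rw [Finsupp.mapRange_apply]
      exact (Int.mul_ediv_cancel' (hall j)).symm
    set i := S.min' hSne with hidef
    have himem : i ∈ S := Finset.min'_mem _ _
    have hind : ¬ (n:ℤ) ∣ ofLex g i := (Finset.mem_filter.mp himem).2
    have hidvd : ∀ k < i, (n:ℤ) ∣ ofLex g k := by
      intro k hk
      by_contra hd
      have hkmem : k ∈ S := Finset.mem_filter.mpr
        ⟨Finsupp.mem_support_iff.mpr (fun e => hd (e ▸ dvd_zero _)), hd⟩
      exact absurd (Finset.min'_le _ _ hkmem) (not_le.mpr hk)
    have hdisjHgt : ∀ x ∈ Hgt i, ¬ ∃ y : Lex (Γ →₀ ℤ), x = g + n • y := by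
      rintro x hx ⟨y, rfl⟩
      have h1 : ofLex g i + n * ofLex y i = 0 := by
        have := mem_Hgt.mp hx i le_rfl
        rw [show ofLex (g + n • y) i = ofLex g i + ofLex (n • y) i from rfl, nsmul_apply] at this
        exact this
      exact hind ⟨-(ofLex y i), by linarith⟩
    refine ⟨i, subset_antisymm ?_ (hmax _ (Hgt_convex i) hdisjHgt)⟩
    intro h hh
    by_contra hn'
    -- construct y cancelling g below i
    set y : Lex (Γ →₀ ℤ) := toLex (Finsupp.onFinset (ofLex g).support
      (fun k => if k < i then -(ofLex g k / (n:ℤ)) else 0)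
      (fun k hk => by
        by_contra hc
        rw [Finsupp.notMem_support_iff] at hc
        rcases lt_or_ge k i with h' | h'
        · rw [if_pos h', hc] at hk; simp at hk
        · rw [if_neg (not_lt.mpr h')] at hk; exact hk rfl)) with hy
    have hyval : ∀ k, ofLex y k = if k < i then -(ofLex g k / (n:ℤ)) else 0 := fun k => rfl
    have hbelow : ∀ k < i, ofLex (g + n • y) k = 0 := by
      intro k hk
      show ofLex g k + ofLex (n • y) k = 0
      rw [nsmul_apply, hyval, if_pos hk]
      have := Int.mul_ediv_cancel' (hidvd k hk)
      linarith
    exact hdisj _ (mem_of_convex hHconv hh hn' hbelow) ⟨y, rfl⟩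
  · rintro ⟨i, rfl⟩
    refine ⟨toLex (Finsupp.single i 1), ?_, Hgt_convex i, ?_, ?_⟩
    · rintro ⟨x, hx⟩
      have h1 : (1 : ℤ) = n * ofLex x i := by
        have := congrArg (fun z : Lex (Γ →₀ ℤ) => ofLex z i) hx
        simpa [nsmul_apply] using this
      have : (n:ℤ) ∣ 1 := ⟨ofLex x i, h1⟩
      have := Int.le_of_dvd one_pos this
      omega
    · rintro x hx ⟨y, rfl⟩
      have h1 : Finsupp.single i (1:ℤ) i + n * ofLex y i = 0 := by
        have := mem_Hgt.mp hx i le_rfl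
        rw [show ofLex (toLex (Finsupp.single i (1:ℤ)) + n • y) i
            = Finsupp.single i (1:ℤ) i + ofLex (n • y) i from rfl, nsmul_apply] at this
        exact this
      rw [Finsupp.single_eq_same] at h1
      have : (n:ℤ) ∣ 1 := ⟨-(ofLex y i), by linarith⟩
      have := Int.le_of_dvd one_pos this
      omega
    · intro H' hH' hdisj' h hh
      by_contra hn'
      have hmem : toLex (Finsupp.single i (1:ℤ)) ∈ H' := by
        refine mem_of_convex hH' hh hn' ?_
        intro j hj
        exact Finsupp.single_eq_of_ne' (ne_of_gt hj)
      exact hdisj' _ hmem ⟨0, by rw [nsmul_zero, add_zero]⟩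

lemma Hgt_anti {i j : Γ} (h : i ≤ j) : Hgt j ⊆ Hgt i := fun x hx =>
  mem_Hgt.mpr fun k hk => mem_Hgt.mp hx k (hk.trans h)

lemma Hgt_lt_iff (i j : Γ) : i < j ↔ Hgt j ⊂ Hgt i := by
  constructor
  · intro hij
    refine ⟨Hgt_anti hij.le, fun hc => ?_⟩
    have h1 : toLex (Finsupp.single j (1:ℤ)) ∈ Hgt i := by
      rw [mem_Hgt]
      intro k hk
      exact Finsupp.single_eq_of_ne' (ne_of_gt (lt_of_le_of_lt hk hij))
    have h2 := mem_Hgt.mp (hc h1) j le_rfl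
    simp [show ofLex (toLex (Finsupp.single j (1:ℤ))) = Finsupp.single j 1 from rfl] at h2
  · intro hss
    by_contra hc
    exact hss.not_subset (Hgt_anti (not_lt.mp hc))

end AuxStmt4

/-- For `n ≥ 2` and `G = Lex (Γ →₀ ℤ)`, the family `{A(g) | g ≠ 0}` coincides with the family
`{F_n(g) | g ∉ nG}`, both coincide with `{H_{>i} | i ∈ Γ}`, and `i ↦ H_{>i}` is an
order-reversing bijection from `Γ` onto this family ordered by inclusion. -/
theorem stmt_4 {Γ : Type*} [LinearOrder Γ] (n : ℕ) (hn : 2 ≤ n) :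
    {H : Set (Lex (Γ →₀ ℤ)) | IsLargestAvoiding H} =
      {H : Set (Lex (Γ →₀ ℤ)) | IsFundament n H} ∧
    {H : Set (Lex (Γ →₀ ℤ)) | IsLargestAvoiding H} = Set.range (Hgt (Γ := Γ)) ∧
    ∀ i j : Γ, i < j ↔ Hgt j ⊂ Hgt i := by
  refine ⟨?_, ?_, AuxStmt4.Hgt_lt_iff⟩
  · ext H
    simp only [Set.mem_setOf_eq, AuxStmt4.isLargestAvoiding_iff, AuxStmt4.isFundament_iff hn]
  · ext H
    simp only [Set.mem_setOf_eq, AuxStmt4.isLargestAvoiding_iff, Set.mem_range]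
    exact ⟨fun ⟨i, h⟩ => ⟨i, h.symm⟩, fun ⟨i, h⟩ => ⟨i, h.symm⟩⟩
end

section
/- Let Γ be a nonempty linear order, G = Lex(Γ →₀ ℤ), and n ≥ 2 an integer. Then for every nonzero g ∈ G there exists h ∈ G with |h| ≤ |g| such that h is not of the form n • x for any x ∈ G. -/
/-- Let `Γ` be a nonempty linear order, `G = Lex (Γ →₀ ℤ)`, and `n ≥ 2`. Then for every nonzero
`g ∈ G` there exists `h ∈ G` with `|h| ≤ |g|` such that `h` is not of the form `n • x`. -/
theorem stmt_5 {Γ : Type*} [LinearOrder Γ] [Nonempty Γ] (n : ℕ) (hn : 2 ≤ n)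
    (g : Lex (Γ →₀ ℤ)) (hg : g ≠ 0) :
    ∃ h : Lex (Γ →₀ ℤ), |h| ≤ |g| ∧ ¬ ∃ x : Lex (Γ →₀ ℤ), h = n • x := by
  have habs : 0 < |g| := abs_pos.mpr hg
  obtain ⟨i, hlt, hi⟩ := Finsupp.Lex.lt_iff.mp habs
  simp only [ofLex_zero, Finsupp.zero_apply] at hlt hi
  set a : ℤ := ofLex |g| i with ha
  by_cases hdvd : (n : ℤ) ∣ a
  · -- leading coefficient divisible by n : subtract 1 there
    have ha2 : (2 : ℤ) ≤ a := by
      obtain ⟨c, hc⟩ := hdvd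
      have hc1 : 1 ≤ c := by nlinarith
      calc (2:ℤ) ≤ n := by exact_mod_cast hn
        _ ≤ n * c := le_mul_of_one_le_right (by positivity) hc1
        _ = a := hc.symm
    refine ⟨|g| - toLex (Finsupp.single i 1), ?_, ?_⟩
    · have hpos : 0 < |g| - toLex (Finsupp.single i 1) := by
        rw [Finsupp.Lex.lt_iff]
        refine ⟨i, fun j hj => ?_, ?_⟩
        · simp [Finsupp.single_apply, ne_of_gt hj, (hlt j hj).symm]
        · simp only [ofLex_zero, Finsupp.zero_apply, ofLex_sub, Finsupp.sub_apply]
          simp [Finsupp.single_apply, ← ha]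
          omega
      have hle : |g| - toLex (Finsupp.single i 1) ≤ |g| := by
        have : (0 : Lex (Γ →₀ ℤ)) < toLex (Finsupp.single i 1) := by
          rw [Finsupp.Lex.lt_iff]
          exact ⟨i, fun j hj => by simp [Finsupp.single_apply, ne_of_gt hj], by simp⟩
        calc |g| - toLex (Finsupp.single i 1) ≤ |g| - 0 := by
              exact sub_le_sub_left this.le _
          _ = |g| := sub_zero _
      rw [abs_of_pos hpos]; exact hle
    · rintro ⟨x, hx⟩
      have hcoord := congrArg (fun y : Lex (Γ →₀ ℤ) => ofLex y i) hx
      simp only [ofLex_sub, Finsupp.sub_apply, ofLex_toLex, Finsupp.single_apply, if_pos rfl,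
        ofLex_smul, Finsupp.smul_apply, ← ha, nsmul_eq_mul] at hcoord
      have h1 : (n : ℤ) ∣ a - 1 := ⟨ofLex x i, hcoord⟩
      have h2 : (n : ℤ) ∣ 1 := by have := dvd_sub hdvd h1; simpa using this
      have := Int.le_of_dvd one_pos h2
      omega
  · refine ⟨|g|, (abs_abs g).le, ?_⟩
    rintro ⟨x, hx⟩
    refine hdvd ⟨ofLex x i, ?_⟩
    have := congrArg (fun y : Lex (Γ →₀ ℤ) => ofLex y i) hx
    rw [ha, this]; show (n • ofLex x) i = _; simp [nsmul_eq_mul]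
end

section
/- Let Γ be a nonempty linear order, G = Lex(Γ →₀ ℤ), let Δ be a nontrivial divisible linearly ordered abelian group, and let n ≥ 2 be an integer. In the lexicographic product G ×ₗ Δ (where the G-coordinate is dominant, so that {0} × Δ is a convex subgroup), there exists a nonzero element g such that every h with |h| ≤ |g| is of the form n • x. (Hence G ×ₗ Δ fails the first-order property, valid in G, that below every nonzero element there is an element not divisible by n.) -/
/-- Let `Γ` be a nonempty linear order, `G = Lex (Γ →₀ ℤ)`, let `Δ` be a nontrivial divisible
linearly ordered abelian group, and `n ≥ 2`. In the lexicographic product `G ×ₗ Δ` (the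
`G`-coordinate dominant), there is a nonzero element `g` such that every `h` with `|h| ≤ |g|`
is of the form `n • x`. -/
theorem stmt_6 {Γ : Type*} [LinearOrder Γ] [Nonempty Γ]
    {Δ : Type*} [AddCommGroup Δ] [LinearOrder Δ] [IsOrderedAddMonoid Δ] [Nontrivial Δ]
    (hdiv : ∀ d : Δ, ∀ m : ℕ, 0 < m → ∃ e : Δ, m • e = d)
    (n : ℕ) (hn : 2 ≤ n) :
    ∃ g : Lex (Lex (Γ →₀ ℤ) × Δ), g ≠ 0 ∧
      ∀ h : Lex (Lex (Γ →₀ ℤ) × Δ), |h| ≤ |g| → ∃ x : Lex (Lex (Γ →₀ ℤ) × Δ), h = n • x := by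
  obtain ⟨d, hd⟩ := exists_ne (0 : Δ)
  have hd' : 0 < |d| := abs_pos.mpr hd
  refine ⟨toLex (0, |d|), ?_, ?_⟩
  · intro h0
    have : ((0, |d|) : Lex (Γ →₀ ℤ) × Δ) = 0 := by
      simpa using congrArg ofLex h0
    exact hd'.ne' (congrArg Prod.snd this)
  · intro h hle
    have hgpos : (0 : Lex (Lex (Γ →₀ ℤ) × Δ)) < toLex (0, |d|) := by
      rw [show (0 : Lex (Lex (Γ →₀ ℤ) × Δ)) = toLex (0, 0) from rfl,
        Prod.Lex.lt_iff]
      exact Or.inr ⟨rfl, hd'⟩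
    have hgabs : |toLex ((0 : Lex (Γ →₀ ℤ)), |d|)| = toLex (0, |d|) := abs_of_pos hgpos
    rw [hgabs] at hle
    have hfst : (ofLex h).1 = 0 := by
      by_contra hne
      rcases (Ne.lt_or_gt hne) with hlt | hlt
      · have : toLex (0, |d|) < -h := by
          have : -h = toLex (-(ofLex h).1, -(ofLex h).2) := rfl
          rw [this, Prod.Lex.lt_iff]
          exact Or.inl (by simpa using hlt)
        exact absurd (this.trans_le ((neg_le_abs h).trans hle)) (lt_irrefl _)
      · have : toLex (0, |d|) < h := by
          have : h = toLex ((ofLex h).1, (ofLex h).2) := rfl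
          rw [this, Prod.Lex.lt_iff]
          exact Or.inl hlt
        exact absurd (this.trans_le ((le_abs_self h).trans hle)) (lt_irrefl _)
    obtain ⟨e, he⟩ := hdiv (ofLex h).2 n (by omega)
    refine ⟨toLex (0, e), ?_⟩
    apply ofLex.injective
    have hsm : ofLex (n • toLex ((0 : Lex (Γ →₀ ℤ)), e)) = ((0 : Lex (Γ →₀ ℤ)), n • e) := rfl
    rw [hsm, he]
    exact Prod.ext hfst rfl
end

section
/- Let G be a linearly ordered abelian group and equip the field K = HahnSeries G ℝ with the linear order in which x > 0 if and only if x is nonzero and its leading coefficient (the coefficient at the least element of its support) is positive. Then for all nonzero x, y ∈ K: order(x) = order(y) if and only if there exists a natural number n with |x| ≤ n • |y| and |y| ≤ n • |x|. (That is, the canonical Hahn series valuation x ↦ order(x) is the natural valuation of the ordered field K, and its value group is G.) -/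
/-- `x > 0` in the ordered field `K = HahnSeries G ℝ`: `x` is nonzero and its leading
coefficient (the coefficient at the least element of its support) is positive. -/
def HahnPos {G : Type*} [AddCommGroup G] [LinearOrder G] [IsOrderedAddMonoid G] (x : HahnSeries G ℝ) : Prop :=
  x ≠ 0 ∧ 0 < x.leadingCoeff

/-- The order of `K = HahnSeries G ℝ` determined by `HahnPos`: `x ≤ y` iff `x = y` or
`y - x > 0`. -/
def HahnLe {G : Type*} [AddCommGroup G] [LinearOrder G] [IsOrderedAddMonoid G] (x y : HahnSeries G ℝ) : Prop :=
  x = y ∨ HahnPos (y - x)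

open Classical in
/-- The absolute value on `K = HahnSeries G ℝ` with respect to this order. -/
noncomputable def HahnAbs {G : Type*} [AddCommGroup G] [LinearOrder G] [IsOrderedAddMonoid G] (x : HahnSeries G ℝ) :
    HahnSeries G ℝ :=
  if HahnPos (-x) then -x else x

namespace HahnAux

variable {G : Type*} [AddCommGroup G] [LinearOrder G] [IsOrderedAddMonoid G]

lemma order_eq_of {c : HahnSeries G ℝ} {o : G} (h1 : c.coeff o ≠ 0)
    (h2 : ∀ g < o, c.coeff g = 0) : c.order = o := by
  have hc : c ≠ 0 := fun h => h1 (by simp [h])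
  refine le_antisymm (HahnSeries.order_le_of_coeff_ne_zero h1) ?_
  by_contra h
  exact (HahnSeries.coeff_order_eq_zero.not.2 hc) (h2 _ (lt_of_not_ge h))

lemma abs_ne {x : HahnSeries G ℝ} (hx : x ≠ 0) : HahnAbs x ≠ 0 := by
  unfold HahnAbs; split <;> simp [hx]

lemma abs_order {x : HahnSeries G ℝ} : (HahnAbs x).order = x.order := by
  unfold HahnAbs; split
  · by_cases hx : x = 0
    · simp [hx]
    · rw [HahnSeries.order_of_ne hx, HahnSeries.order_of_ne (neg_ne_zero.2 hx)]
      congr 1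
      ext g
      simp [HahnSeries.support, HahnSeries.coeff_neg]
  · rfl

lemma abs_lead {x : HahnSeries G ℝ} (hx : x ≠ 0) : 0 < (HahnAbs x).leadingCoeff := by
  have hx' : (-x) ≠ 0 := neg_ne_zero.2 hx
  unfold HahnAbs; split
  · next h => exact h.2
  · next h =>
    rcases lt_trichotomy 0 x.leadingCoeff with h1 | h1 | h1
    · exact h1
    · exact absurd (HahnSeries.leadingCoeff_eq_zero.1 h1.symm) hx
    · exfalso; apply h
      constructor
      · exact hx'
      · rw [HahnSeries.leadingCoeff_eq] at h1 ⊢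
        have : (-x).order = x.order := by
          rw [HahnSeries.order_of_ne hx, HahnSeries.order_of_ne hx']
          congr 1; ext g; simp [HahnSeries.support, HahnSeries.coeff_neg]
        rw [this, HahnSeries.coeff_neg]
        linarith

/-- one-sided key lemma -/
lemma le_nsmul {a b : HahnSeries G ℝ} (ha : a ≠ 0) (hla : 0 < a.leadingCoeff)
    (hlb : 0 < b.leadingCoeff) (ho : a.order = b.order) {n : ℕ}
    (hn : a.leadingCoeff < n * b.leadingCoeff) : HahnLe a (n • b) := by
  by_cases heq : a = n • b
  · exact Or.inl heq
  refine Or.inr ⟨sub_ne_zero.2 (Ne.symm heq), ?_⟩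
  set c := n • b - a with hc
  have hb : b ≠ 0 := HahnSeries.leadingCoeff_ne_zero.1 hlb.ne'
  have hco : c.coeff a.order = n * b.leadingCoeff - a.leadingCoeff := by
    rw [hc, HahnSeries.coeff_sub, HahnSeries.coeff_nsmul]
    rw [HahnSeries.leadingCoeff_eq, HahnSeries.leadingCoeff_eq, ho]
    simp [nsmul_eq_mul]
  have hpos : 0 < c.coeff a.order := by rw [hco]; linarith
  have horder : c.order = a.order := by
    refine order_eq_of hpos.ne' (fun g hg => ?_)
    rw [hc, HahnSeries.coeff_sub, HahnSeries.coeff_nsmul]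
    simp [HahnSeries.coeff_eq_zero_of_lt_order hg,
      HahnSeries.coeff_eq_zero_of_lt_order (ho ▸ hg)]
  rw [HahnSeries.leadingCoeff_eq, horder]
  exact hpos

/-- one-sided key lemma for the converse -/
lemma not_le_nsmul {a b : HahnSeries G ℝ} (ha : a ≠ 0) (hb : b ≠ 0)
    (hla : 0 < a.leadingCoeff) (hlb : 0 < b.leadingCoeff) (ho : a.order < b.order) (n : ℕ) :
    ¬ HahnLe a (n • b) := by
  have hbo : ∀ g ≤ a.order, (n • b).coeff g = 0 := by
    intro g hg
    rw [HahnSeries.coeff_nsmul]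
    have : b.coeff g = 0 := HahnSeries.coeff_eq_zero_of_lt_order (lt_of_le_of_lt hg ho)
    simp [this]
  rintro (h | ⟨hne, hpos⟩)
  · have := hbo a.order le_rfl
    rw [← h] at this
    exact (HahnSeries.coeff_order_eq_zero.not.2 ha) this
  · set c := n • b - a with hc
    have hco : c.coeff a.order = - a.leadingCoeff := by
      rw [hc, HahnSeries.coeff_sub, hbo a.order le_rfl, HahnSeries.leadingCoeff_eq]
      ring
    have hcne : c.coeff a.order ≠ 0 := by rw [hco]; simpa using hla.ne'
    have horder : c.order = a.order := by
      refine order_eq_of hcne (fun g hg => ?_)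
      rw [hc, HahnSeries.coeff_sub, hbo g hg.le,
        HahnSeries.coeff_eq_zero_of_lt_order hg]
      simp
    rw [HahnSeries.leadingCoeff_eq, horder, hco] at hpos
    linarith

end HahnAux

/-- Equip `K = HahnSeries G ℝ` with the linear order in which `x > 0` iff `x` is nonzero and
its leading coefficient is positive. For all nonzero `x, y ∈ K`: `order x = order y` iff there
is `n : ℕ` with `|x| ≤ n • |y|` and `|y| ≤ n • |x|`; that is, the Hahn series valuation
`x ↦ order x` is the natural valuation of the ordered field `K`, with value group `G`. -/
theorem stmt_9 {G : Type*} [AddCommGroup G] [LinearOrder G] [IsOrderedAddMonoid G] (x y : HahnSeries G ℝ)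
    (hx : x ≠ 0) (hy : y ≠ 0) :
    x.order = y.order ↔
      ∃ n : ℕ, HahnLe (HahnAbs x) (n • HahnAbs y) ∧ HahnLe (HahnAbs y) (n • HahnAbs x) := by
  set a := HahnAbs x
  set b := HahnAbs y
  have ha : a ≠ 0 := HahnAux.abs_ne hx
  have hb : b ≠ 0 := HahnAux.abs_ne hy
  have hla : 0 < a.leadingCoeff := HahnAux.abs_lead hx
  have hlb : 0 < b.leadingCoeff := HahnAux.abs_lead hy
  have hoa : a.order = x.order := HahnAux.abs_order
  have hob : b.order = y.order := HahnAux.abs_order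
  constructor
  · intro h
    have ho : a.order = b.order := by rw [hoa, hob, h]
    obtain ⟨n, hn⟩ := exists_nat_gt (max (a.leadingCoeff / b.leadingCoeff)
      (b.leadingCoeff / a.leadingCoeff))
    have h1 : a.leadingCoeff < n * b.leadingCoeff := by
      have := (max_lt_iff.1 hn).1
      rw [div_lt_iff₀ hlb] at this; linarith
    have h2 : b.leadingCoeff < n * a.leadingCoeff := by
      have := (max_lt_iff.1 hn).2
      rw [div_lt_iff₀ hla] at this; linarith
    exact ⟨n, HahnAux.le_nsmul ha hla hlb ho h1, HahnAux.le_nsmul hb hlb hla ho.symm h2⟩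
  · rintro ⟨n, h1, h2⟩
    by_contra h
    rw [← hoa, ← hob] at h
    rcases lt_or_gt_of_ne h with ho | ho
    · exact HahnAux.not_le_nsmul ha hb hla hlb ho n h1
    · exact HahnAux.not_le_nsmul hb ha hlb hla ho n h2
end

section
/- Let Γ₀ = ℕ ×ₗ (ℚ ⊕ₗ Fin 2) and Γ₁ = ℕ ×ₗ (ℚ ⊕ₗ Fin 3), each with the lexicographic order (these realize the orders ∑_{k∈ω}(ℚ+2) and ∑_{k∈ω}(ℚ+3) respectively), and let L = Γ₀ ⊕ₗ Γ₁ᵒᵈ be their lexicographic sum, with Γ₁ᵒᵈ the order-dual of Γ₁. Then the set of elements of L lying in the second summand Γ₁ᵒᵈ is a nonempty proper end segment of L that is definable without parameters in the first-order language of order. -/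
open FirstOrder

attribute [local instance] FirstOrder.Language.orderStructure

/-- `Γ₀ = ℕ ×ₗ (ℚ ⊕ₗ Fin 2)`, realizing the order `∑_{k ∈ ω} (ℚ + 2)`. -/
abbrev Gamma0 : Type := ℕ ×ₗ (ℚ ⊕ₗ Fin 2)

/-- `Γ₁ = ℕ ×ₗ (ℚ ⊕ₗ Fin 3)`, realizing the order `∑_{k ∈ ω} (ℚ + 3)`. -/
abbrev Gamma1 : Type := ℕ ×ₗ (ℚ ⊕ₗ Fin 3)

/-- `L = Γ₀ ⊕ₗ Γ₁ᵒᵈ`, the lexicographic sum of `Γ₀` and the order-dual of `Γ₁`. -/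
abbrev L11 : Type := Gamma0 ⊕ₗ Gamma1ᵒᵈ

/-- The set of elements of `L` lying in the second summand `Γ₁ᵒᵈ`. -/
def S11 : Set L11 := {x | ∃ y : Gamma1ᵒᵈ, x = toLex (Sum.inr y)}

instance : Language.order.OrderedStructure L11 := ⟨fun _ => Iff.rfl⟩

open Language in
/-- `φ(x) : ∃ w u v, u < w ∧ w < v ∧ w ≤ x ∧ (nothing between u,w) ∧ (nothing between w,v)`. -/
def phi11 : Language.order.Formula (Fin 1) :=
  (((Term.lt (&1) (&0) ⊓ Term.lt (&0) (&2) ⊓ Term.le (&0) (Term.var (Sum.inl 0)) ⊓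
     (∼(Term.lt (&1) (&3) ⊓ Term.lt (&3) (&0))).all ⊓
     (∼(Term.lt (&0) (&3) ⊓ Term.lt (&3) (&2))).all).ex).ex).ex

lemma snoc3 {α : Type*} (x0 x1 x2 : α) :
    (Fin.snoc (Fin.snoc (Fin.snoc (default : Fin 0 → α) x0) x1) x2 : Fin 3 → α)
      = ![x0, x1, x2] := by
  funext i; fin_cases i <;> rfl

lemma snoc4 {α : Type*} (x0 x1 x2 x3 : α) :
    (Fin.snoc (Fin.snoc (Fin.snoc (Fin.snoc (default : Fin 0 → α) x0) x1) x2) x3 : Fin 4 → α)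
      = ![x0, x1, x2, x3] := by
  funext i; fin_cases i <;> rfl

lemma realize_phi11 (v : Fin 1 → L11) :
    phi11.Realize v ↔ ∃ w u v' : L11, u < w ∧ w < v' ∧ w ≤ v 0 ∧
      (∀ z, ¬(u < z ∧ z < w)) ∧ (∀ z, ¬(w < z ∧ z < v')) := by
  simp only [phi11, Language.Formula.Realize, Language.BoundedFormula.realize_ex,
    Language.BoundedFormula.realize_all, Language.BoundedFormula.realize_inf,
    Language.BoundedFormula.realize_not, Language.Term.realize_le, Language.Term.realize_lt,
    Language.Term.realize_var, Function.comp_apply, Sum.elim_inl, Sum.elim_inr,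
    snoc3, snoc4, Matrix.cons_val_zero, Matrix.cons_val_one, Matrix.head_cons,
    Matrix.cons_val_two, Matrix.cons_val_three, Matrix.tail_cons]
  tauto

def a0 (n : ℕ) (c : ℚ ⊕ Fin 2) : L11 := toLex (Sum.inl (toLex (n, toLex c)))
def a1 (n : ℕ) (c : ℚ ⊕ Fin 3) : L11 := toLex (Sum.inr (OrderDual.toDual (toLex (n, toLex c))))

lemma L11_cases (x : L11) : (∃ n c, x = a0 n c) ∨ (∃ n c, x = a1 n c) := by
  rcases h : ofLex x with g | y
  · left
    exact ⟨(ofLex g).1, ofLex (ofLex g).2, by rw [← toLex_ofLex x, h]; rfl⟩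
  · right
    exact ⟨(ofLex (OrderDual.ofDual y)).1, ofLex (ofLex (OrderDual.ofDual y)).2,
      by rw [← toLex_ofLex x, h]; rfl⟩

lemma a0_lt_a0 {n m : ℕ} {c d : ℚ ⊕ Fin 2} :
    a0 n c < a0 m d ↔ n < m ∨ (n = m ∧ toLex c < toLex d) := by
  rw [a0, a0, Sum.Lex.inl_lt_inl_iff, Prod.Lex.lt_iff]
  exact Iff.rfl

lemma a1_lt_a1 {n m : ℕ} {c d : ℚ ⊕ Fin 3} :
    a1 n c < a1 m d ↔ m < n ∨ (m = n ∧ toLex d < toLex c) := by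
  rw [a1, a1, Sum.Lex.inr_lt_inr_iff, OrderDual.toDual_lt_toDual, Prod.Lex.lt_iff]
  exact Iff.rfl

lemma a1_le_a1 {n m : ℕ} {c d : ℚ ⊕ Fin 3} :
    a1 n c ≤ a1 m d ↔ m < n ∨ (m = n ∧ toLex d ≤ toLex c) := by
  rw [a1, a1, Sum.Lex.inr_le_inr_iff, OrderDual.toDual_le_toDual, Prod.Lex.le_iff]
  exact Iff.rfl

lemma a0_lt_a1 (n m : ℕ) (c : ℚ ⊕ Fin 2) (d : ℚ ⊕ Fin 3) : a0 n c < a1 m d :=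
  Sum.Lex.inl_lt_inr _ _

lemma not_a1_lt_a0 (n m : ℕ) (c : ℚ ⊕ Fin 3) (d : ℚ ⊕ Fin 2) : ¬ a1 n c < a0 m d :=
  Sum.Lex.not_inr_lt_inl

lemma not_a1_le_a0 (n m : ℕ) (c : ℚ ⊕ Fin 3) (d : ℚ ⊕ Fin 2) : ¬ a1 n c ≤ a0 m d :=
  Sum.Lex.not_inr_le_inl

/-- nothing strictly between `a1 n (inr j)` and `a1 n (inr i)` when `j = i+1`. -/
lemma no_between (n : ℕ) (i j : Fin 3) (hij : (i : ℕ) + 1 = (j : ℕ)) (z : L11) :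
    ¬ (a1 n (Sum.inr j) < z ∧ z < a1 n (Sum.inr i)) := by
  rintro ⟨h1, h2⟩
  rcases L11_cases z with ⟨m, d, rfl⟩ | ⟨m, d, rfl⟩
  · exact not_a1_lt_a0 _ _ _ _ h1
  · rw [a1_lt_a1] at h1 h2
    rcases h1 with h1 | ⟨rfl, h1⟩ <;> rcases h2 with h2 | ⟨h2e, h2⟩ <;> try omega
    rcases d with q | k
    · exact Sum.Lex.not_inr_lt_inl h2
    · rw [Sum.Lex.inr_lt_inr_iff, Fin.lt_def] at h1 h2
      omega

/-- no element of the `Gamma0` part has both an immediate predecessor and successor. -/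
lemma g0_no_both (n : ℕ) (c : ℚ ⊕ Fin 2)
    (hp : ∃ u, u < a0 n c ∧ ∀ z, ¬(u < z ∧ z < a0 n c))
    (hs : ∃ v, a0 n c < v ∧ ∀ z, ¬(a0 n c < z ∧ z < v)) : False := by
  rcases c with q | k
  · -- rational: no immediate predecessor
    obtain ⟨u, hu, hz⟩ := hp
    rcases L11_cases u with ⟨m, d, rfl⟩ | ⟨m, d, rfl⟩
    · rw [a0_lt_a0] at hu
      rcases hu with hm | ⟨rfl, hd⟩
      · exact hz (a0 n (Sum.inl (q - 1)))
          ⟨a0_lt_a0.2 (Or.inl hm),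
           a0_lt_a0.2 (Or.inr ⟨rfl, Sum.Lex.inl_lt_inl_iff.2 (by linarith)⟩)⟩
      · rcases d with q' | k'
        · rw [Sum.Lex.inl_lt_inl_iff] at hd
          exact hz (a0 m (Sum.inl ((q' + q) / 2)))
            ⟨a0_lt_a0.2 (Or.inr ⟨rfl, Sum.Lex.inl_lt_inl_iff.2 (by linarith)⟩),
             a0_lt_a0.2 (Or.inr ⟨rfl, Sum.Lex.inl_lt_inl_iff.2 (by linarith)⟩)⟩
        · exact Sum.Lex.not_inr_lt_inl hd
    · exact not_a1_lt_a0 _ _ _ _ hu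
  · rcases k with ⟨kv, hkv⟩
    interval_cases kv
    · -- bottom point of the pair: no immediate predecessor
      obtain ⟨u, hu, hz⟩ := hp
      rcases L11_cases u with ⟨m, d, rfl⟩ | ⟨m, d, rfl⟩
      · rw [a0_lt_a0] at hu
        rcases hu with hm | ⟨rfl, hd⟩
        · exact hz (a0 n (Sum.inl 0))
            ⟨a0_lt_a0.2 (Or.inl hm),
             a0_lt_a0.2 (Or.inr ⟨rfl, Sum.Lex.inl_lt_inr _ _⟩)⟩
        · rcases d with q' | k'
          · exact hz (a0 m (Sum.inl (q' + 1)))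
              ⟨a0_lt_a0.2 (Or.inr ⟨rfl, Sum.Lex.inl_lt_inl_iff.2 (by linarith)⟩),
               a0_lt_a0.2 (Or.inr ⟨rfl, Sum.Lex.inl_lt_inr _ _⟩)⟩
          · rcases k' with ⟨k'v, hk'v⟩
            rw [Sum.Lex.inr_lt_inr_iff, Fin.mk_lt_mk] at hd
            omega
      · exact not_a1_lt_a0 _ _ _ _ hu
    · -- top point of the pair: no immediate successor
      obtain ⟨v, hv, hz⟩ := hs
      rcases L11_cases v with ⟨m, d, rfl⟩ | ⟨m, d, rfl⟩
      · rw [a0_lt_a0] at hv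
        rcases hv with hm | ⟨rfl, hd⟩
        · rcases d with q | k'
          · exact hz (a0 m (Sum.inl (q - 1)))
              ⟨a0_lt_a0.2 (Or.inl hm),
               a0_lt_a0.2 (Or.inr ⟨rfl, Sum.Lex.inl_lt_inl_iff.2 (by linarith)⟩)⟩
          · exact hz (a0 m (Sum.inl 0))
              ⟨a0_lt_a0.2 (Or.inl hm),
               a0_lt_a0.2 (Or.inr ⟨rfl, Sum.Lex.inl_lt_inr _ _⟩)⟩
        · rcases d with q | k'
          · exact Sum.Lex.not_inr_lt_inl hd
          · rcases k' with ⟨k'v, hk'v⟩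
            rw [Sum.Lex.inr_lt_inr_iff, Fin.mk_lt_mk] at hd
            omega
      · exact hz (a0 (n + 1) (Sum.inl 0))
          ⟨a0_lt_a0.2 (Or.inl (by omega)), a0_lt_a1 _ _ _ _⟩

lemma mem_S11_iff (x : L11) :
    x ∈ S11 ↔ ∃ w u v : L11, u < w ∧ w < v ∧ w ≤ x ∧
      (∀ z, ¬(u < z ∧ z < w)) ∧ (∀ z, ¬(w < z ∧ z < v)) := by
  constructor
  · rintro ⟨y, rfl⟩
    obtain ⟨n, c, hx⟩ : ∃ n c, toLex (Sum.inr y) = a1 n c := by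
      rcases L11_cases (toLex (Sum.inr y)) with ⟨n, c, h⟩ | h
      · exact absurd (toLex.injective (show toLex (Sum.inr y) = toLex (Sum.inl (toLex (n, toLex c))) from h)) Sum.inr_ne_inl
      · exact h
    refine ⟨a1 (n + 1) (Sum.inr 1), a1 (n + 1) (Sum.inr 2), a1 (n + 1) (Sum.inr 0),
      a1_lt_a1.2 (Or.inr ⟨rfl, Sum.Lex.inr_lt_inr_iff.2 (by decide)⟩),
      a1_lt_a1.2 (Or.inr ⟨rfl, Sum.Lex.inr_lt_inr_iff.2 (by decide)⟩),
      hx ▸ a1_le_a1.2 (Or.inl (by omega)), ?_, ?_⟩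
    · exact fun z => no_between (n + 1) 1 2 rfl z
    · exact fun z => no_between (n + 1) 0 1 rfl z
  · rintro ⟨w, u, v, hu, hv, hwx, hzu, hzv⟩
    rcases L11_cases w with ⟨n, c, rfl⟩ | ⟨n, c, rfl⟩
    · exact (g0_no_both n c ⟨u, hu, hzu⟩ ⟨v, hv, hzv⟩).elim
    · rcases L11_cases x with ⟨m, d, rfl⟩ | ⟨m, d, rfl⟩
      · exact absurd hwx (not_a1_le_a0 _ _ _ _)
      · exact ⟨_, rfl⟩


/-- In `L = Γ₀ ⊕ₗ Γ₁ᵒᵈ` with `Γ₀ = ℕ ×ₗ (ℚ ⊕ₗ Fin 2)` and `Γ₁ = ℕ ×ₗ (ℚ ⊕ₗ Fin 3)`, the set of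
elements lying in the second summand `Γ₁ᵒᵈ` is a nonempty proper end segment of `L` that is
definable without parameters in the first-order language of order. -/
theorem stmt_11 :
    S11.Nonempty ∧ S11 ≠ Set.univ ∧ (∀ ⦃i j : L11⦄, i ∈ S11 → i ≤ j → j ∈ S11) ∧
      Set.Definable₁ (∅ : Set L11) Language.order S11 := by
  refine ⟨⟨a1 0 (Sum.inl 0), _, rfl⟩, ?_, ?_, ?_⟩
  · intro h
    have : a0 0 (Sum.inl 0) ∈ S11 := h ▸ Set.mem_univ _
    obtain ⟨y, hy⟩ := this
    exact Sum.inl_ne_inr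
      (toLex.injective (show toLex (Sum.inl (toLex ((0 : ℕ), toLex (Sum.inl (0 : ℚ)))))
        = toLex (Sum.inr y) from hy))
  · rintro i j ⟨y, rfl⟩ hij
    rcases L11_cases j with ⟨m, d, rfl⟩ | ⟨m, d, rfl⟩
    · exact absurd hij Sum.Lex.not_inr_le_inl
    · exact ⟨_, rfl⟩
  · rw [Set.Definable₁, Set.empty_definable_iff]
    refine ⟨phi11, Set.ext fun v => ?_⟩
    simp only [Set.mem_setOf_eq, realize_phi11]
    exact mem_S11_iff (v 0)
end
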